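/- arXiv:2510.04548 — 2 statements merged into one kernel-verified Lean document; each statement's English description precedes it below -/
import Mathlib

section
/- Let D, r ∈ ℕ with r ≤ D, let A ∈ ℝ^{D×r} satisfy AᵀA = I_r, and let S ∈ ℝ^{D×D} be symmetric positive semidefinite with A Aᵀ S = S. Then for all real a, b > 0 and every integer l ≥ 1, tr( A Aᵀ (a S + b I_D)^{−l} ) = tr( (a AᵀS A + b I_r)^{−l} ). (Both a S + b I_D and a AᵀSA + b I_r are positive definite, hence invertible.) -/
open Matrix

lemma aux_posdef {n : ℕ} {X : Matrix (Fin n) (Fin n) ℝ} (hX : X.PosSemidef)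
    {a b : ℝ} (ha : 0 < a) (hb : 0 < b) : (a • X + b • 1).PosDef := by
  rw [posDef_iff_dotProduct_mulVec]
  constructor
  · have h1 : (a • X).IsHermitian := by
      unfold Matrix.IsHermitian
      rw [conjTranspose_smul, hX.1]
      simp
    have h2 : ((b : ℝ) • (1 : Matrix (Fin n) (Fin n) ℝ)).IsHermitian := by
      unfold Matrix.IsHermitian
      rw [conjTranspose_smul]
      simp
    exact h1.add h2
  · intro x hx
    rw [add_mulVec, dotProduct_add, smul_mulVec, smul_mulVec,
      dotProduct_smul, dotProduct_smul, one_mulVec]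
    have h1 : (0:ℝ) ≤ star x ⬝ᵥ X *ᵥ x := hX.dotProduct_mulVec_nonneg x
    have h2 : (0:ℝ) < star x ⬝ᵥ x := by
      simpa using dotProduct_star_self_pos_iff.mpr hx
    have := mul_pos hb h2
    have := mul_nonneg ha.le h1
    simp only [smul_eq_mul]
    positivity

/-- For `A` with orthonormal columns, `S` symmetric PSD with
`A Aᵀ S = S`, `a, b > 0` and `l ≥ 1`,
`tr(A Aᵀ (a S + b I_D)^{−l}) = tr((a Aᵀ S A + b I_r)^{−l})`. -/
theorem stmt_3 (D r : ℕ) (hr : r ≤ D)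
    (A : Matrix (Fin D) (Fin r) ℝ) (hA : Aᵀ * A = 1)
    (S : Matrix (Fin D) (Fin D) ℝ) (hSpsd : S.PosSemidef)
    (hAS : A * Aᵀ * S = S)
    (a b : ℝ) (ha : 0 < a) (hb : 0 < b) (l : ℕ) (hl : 1 ≤ l) :
    (A * Aᵀ * ((a • S + b • 1)⁻¹ ^ l)).trace
      = (((a • (Aᵀ * S * A) + b • 1)⁻¹) ^ l).trace := by
  have hb' : b ≠ 0 := hb.ne'
  set M : Matrix (Fin D) (Fin D) ℝ := a • S + b • 1 with hM
  set N : Matrix (Fin r) (Fin r) ℝ := a • (Aᵀ * S * A) + b • 1 with hN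
  -- S is symmetric
  have hSsymm : Sᵀ = S := by
    have := hSpsd.1
    simpa [Matrix.IsHermitian] using this
  -- AᵀSA is PSD (real case)
  have hASApsd : (Aᵀ * S * A).PosSemidef := by
    have := hSpsd.conjTranspose_mul_mul_same A
    simpa using this
  have hMpd : M.PosDef := aux_posdef hSpsd ha hb
  have hNpd : N.PosDef := aux_posdef hASApsd ha hb
  have hMdet : IsUnit M.det := hMpd.det_pos.ne'.isUnit
  have hNdet : IsUnit N.det := hNpd.det_pos.ne'.isUnit
  -- S * (A * Aᵀ) = S
  have hSA : S * (A * Aᵀ) = S := by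
    have := congrArg Matrix.transpose hAS
    simpa [Matrix.transpose_mul, Matrix.mul_assoc, hSsymm] using this
  -- key: M * A = A * N
  have hMA : M * A = A * N := by
    have hSA' : S * A = A * (Aᵀ * S * A) := by
      calc S * A = (A * Aᵀ * S) * A := by rw [hAS]
        _ = A * (Aᵀ * S * A) := by simp [Matrix.mul_assoc]
    rw [hM, hN]
    rw [Matrix.add_mul, Matrix.mul_add, Matrix.smul_mul, Matrix.mul_smul, hSA',
      Matrix.smul_mul, Matrix.mul_smul, Matrix.one_mul, Matrix.mul_one]
  -- right inverse candidate
  have hMinv : M⁻¹ = A * N⁻¹ * Aᵀ + b⁻¹ • (1 - A * Aᵀ) := by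
    apply Matrix.inv_eq_right_inv
    have h1 : M * (A * N⁻¹ * Aᵀ) = A * Aᵀ := by
      calc M * (A * N⁻¹ * Aᵀ) = (M * A) * N⁻¹ * Aᵀ := by
            simp [Matrix.mul_assoc]
        _ = A * (N * N⁻¹) * Aᵀ := by rw [hMA]; simp [Matrix.mul_assoc]
        _ = A * Aᵀ := by rw [Matrix.mul_nonsing_inv _ hNdet, Matrix.mul_one]
    have h2 : M * (1 - A * Aᵀ) = b • (1 - A * Aᵀ) := by
      rw [hM]
      rw [Matrix.mul_sub, Matrix.mul_one]
      have : (a • S + b • 1) * (A * Aᵀ) = a • S + b • (A * Aᵀ) := by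
        rw [Matrix.add_mul, Matrix.smul_mul, Matrix.smul_mul, Matrix.one_mul, hSA]
      rw [this]
      rw [smul_sub]
      abel
    rw [Matrix.mul_add, h1, Matrix.mul_smul, h2, smul_smul, inv_mul_cancel₀ hb',
      one_smul]
    abel
  -- Aᵀ * M⁻¹ = N⁻¹ * Aᵀ
  have hAtMinv : Aᵀ * M⁻¹ = N⁻¹ * Aᵀ := by
    rw [hMinv, Matrix.mul_add, Matrix.mul_smul, Matrix.mul_sub, Matrix.mul_one,
      ← Matrix.mul_assoc, ← Matrix.mul_assoc, hA, Matrix.one_mul]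
    have h0 : Aᵀ - Aᵀ * (A * Aᵀ) = 0 := by
      rw [← Matrix.mul_assoc, hA, Matrix.one_mul, sub_self]
    rw [h0]
    simp
  -- powers
  have hAtpow : ∀ k : ℕ, Aᵀ * (M⁻¹) ^ k = (N⁻¹) ^ k * Aᵀ := by
    intro k
    induction k with
    | zero => simp
    | succ n ih =>
      rw [pow_succ', pow_succ', ← Matrix.mul_assoc, hAtMinv, Matrix.mul_assoc, ih,
        ← Matrix.mul_assoc]
  rw [Matrix.trace_mul_comm, ← Matrix.mul_assoc,
    Matrix.trace_mul_comm (M⁻¹ ^ l * A) Aᵀ,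
    ← Matrix.mul_assoc, hAtpow l, Matrix.mul_assoc, hA, Matrix.mul_one]
end

section
/- Let D, L ∈ ℕ, x₁, …, x_L, x_{L+1} ∈ ℝ^D, y₁, …, y_L ∈ ℝ, and let C ∈ ℝ^{(D+1)×(L+1)} be the matrix whose l-th column is (x_l, y_l) for l ≤ L and whose last column is (x_{L+1}, 0). Let V, K, Q ∈ ℝ^{(D+1)×(D+1)}, define Atten(C) = C + (1/L) V C (K C)ᵀ (Q C), and let Read(C′) = C′_{D+1, L+1}. Write R = Kᵀ Q, and partition V and R into blocks V = [[V₁₁, v₁₂],[v₂₁ᵀ, v₂₂]], R = [[R₁₁, r₁₂],[r₂₁ᵀ, r₂₂]] with V₁₁, R₁₁ ∈ ℝ^{D×D}, v₁₂, v₂₁, r₁₂, r₂₁ ∈ ℝ^D and v₂₂, r₂₂ ∈ ℝ. If v₂₁ = 0 and r₂₁ = 0, then Read(Atten(C)) = (1/L) v₂₂ Σ_{l=1}^L y_l x_lᵀ R₁₁ x_{L+1} = tr( W Hᵀ ), where W = (v₂₂/D) R₁₁ᵀ ∈ ℝ^{D×D} and H ∈ ℝ^{D×D} has entries H_{ij}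 = (D/L) x_{L+1,i} Σ_{l=1}^L y_l x_{l,j}. -/
open Matrix

/-- reduction of single-layer linear attention to a linear
network. With context matrix `C` built from demonstrations `(x_l, y_l)` and
query `x_{L+1}` (label placeholder `0`), `Atten(C) = C + (1/L) V C (K C)ᵀ (Q C)`,
`R = Kᵀ Q`, and vanishing off-diagonal blocks `v₂₁ = 0`, `r₂₁ = 0`, the readout
at the label position of the query column equals
`(1/L) v₂₂ Σ_l y_l x_lᵀ R₁₁ x_{L+1} = tr(W Hᵀ)` with `W = (v₂₂/D) R₁₁ᵀ` and
`H_{ij} = (D/L) x_{L+1,i} Σ_l y_l x_{l,j}`. -/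
theorem stmt_13 (D L : ℕ)
    (x : Fin (L + 1) → Fin D → ℝ) (y : Fin L → ℝ)
    (C : Matrix (Fin (D + 1)) (Fin (L + 1)) ℝ)
    (hC : ∀ i j, C i j =
      if hi : (i : ℕ) < D then x j ⟨i, hi⟩
      else if hj : (j : ℕ) < L then y ⟨j, hj⟩ else 0)
    (V K Q : Matrix (Fin (D + 1)) (Fin (D + 1)) ℝ)
    (R : Matrix (Fin (D + 1)) (Fin (D + 1)) ℝ) (hR : R = Kᵀ * Q)
    (hv21 : ∀ i : Fin D, V (Fin.last D) i.castSucc = 0)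
    (hr21 : ∀ j : Fin D, R (Fin.last D) j.castSucc = 0)
    (Atten : Matrix (Fin (D + 1)) (Fin (L + 1)) ℝ)
    (hAtten : Atten = C + (1 / (L : ℝ)) • (V * C * (K * C)ᵀ * (Q * C)))
    (W H : Matrix (Fin D) (Fin D) ℝ)
    (hW : ∀ i j : Fin D,
      W i j = V (Fin.last D) (Fin.last D) / (D : ℝ) * R j.castSucc i.castSucc)
    (hH : ∀ i j : Fin D, H i j
      = (D : ℝ) / (L : ℝ) * x (Fin.last L) i * ∑ l : Fin L, y l * x l.castSucc j) :
    Atten (Fin.last D) (Fin.last L)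
        = (1 / (L : ℝ)) * V (Fin.last D) (Fin.last D)
            * ∑ l : Fin L, y l *
                (x l.castSucc ⬝ᵥ
                  (R.submatrix Fin.castSucc Fin.castSucc).mulVec (x (Fin.last L)))
      ∧ Atten (Fin.last D) (Fin.last L) = (W * Hᵀ).trace := by
  -- basic facts about C
  have hC1 : ∀ (i : Fin D) (j : Fin (L+1)), C i.castSucc j = x j i := by
    intro i j
    rw [hC]
    rw [dif_pos (show ((i.castSucc : Fin (D+1)) : ℕ) < D from i.isLt)]
    exact congrArg (x j) (Fin.ext (Fin.coe_castSucc i))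
  have hC2 : ∀ (j : Fin L), C (Fin.last D) j.castSucc = y j := by
    intro j
    rw [hC, dif_neg (by simp), dif_pos (show ((j.castSucc : Fin (L+1)) : ℕ) < L from j.isLt)]
    exact congrArg y (Fin.ext (Fin.coe_castSucc j))
  have hC3 : C (Fin.last D) (Fin.last L) = 0 := by
    rw [hC, dif_neg (by simp), dif_neg (by simp)]
  -- rewrite the attention matrix product
  have hmul : V * C * (K * C)ᵀ * (Q * C) = V * (C * (Cᵀ * (R * C))) := by
    rw [hR, transpose_mul]
    simp only [Matrix.mul_assoc]
  -- inner block computation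
  have hcrc : ∀ j : Fin (L+1), (Cᵀ * (R * C)) j (Fin.last L)
      = x j ⬝ᵥ (R.submatrix Fin.castSucc Fin.castSucc).mulVec (x (Fin.last L)) := by
    intro j
    rw [Matrix.mul_apply]
    rw [Fin.sum_univ_castSucc]
    have hRC : ∀ a : Fin (D+1), (R * C) a (Fin.last L)
        = ∑ b : Fin D, R a b.castSucc * x (Fin.last L) b := by
      intro a
      rw [Matrix.mul_apply, Fin.sum_univ_castSucc, hC3, mul_zero, add_zero]
      exact Finset.sum_congr rfl fun b _ => by rw [hC1]
    have hlast : (Cᵀ) j (Fin.last D) * (R * C) (Fin.last D) (Fin.last L) = 0 := by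
      rw [hRC]
      simp [hr21]
    rw [hlast, add_zero]
    rw [dotProduct, Finset.sum_congr rfl fun i _ => ?_]
    rw [transpose_apply, hC1, hRC, mulVec, dotProduct]
    simp only [submatrix_apply, Finset.mul_sum]
  -- main entry computation
  have key : (V * C * (K * C)ᵀ * (Q * C)) (Fin.last D) (Fin.last L)
      = V (Fin.last D) (Fin.last D) * ∑ l : Fin L, y l *
          (x l.castSucc ⬝ᵥ (R.submatrix Fin.castSucc Fin.castSucc).mulVec (x (Fin.last L))) := by
    rw [hmul, Matrix.mul_apply]
    have hVC : ∀ j : Fin (D+1), (C * (Cᵀ * (R * C))) j (Fin.last L) = 0 → True := fun _ _ => trivial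
    -- off-diagonal V entries vanish.
    rw [Fin.sum_univ_castSucc]
    have h0 : ∑ i : Fin D, V (Fin.last D) i.castSucc *
        (C * (Cᵀ * (R * C))) i.castSucc (Fin.last L) = 0 := by
      simp [hv21]
    rw [h0, zero_add]
    congr 1
    rw [Matrix.mul_apply, Fin.sum_univ_castSucc, hC3, zero_mul, add_zero]
    exact Finset.sum_congr rfl fun l _ => by rw [hC2, hcrc]
  have hA : Atten (Fin.last D) (Fin.last L)
      = (1 / (L : ℝ)) * V (Fin.last D) (Fin.last D)
          * ∑ l : Fin L, y l *
              (x l.castSucc ⬝ᵥ (R.submatrix Fin.castSucc Fin.castSucc).mulVec (x (Fin.last L))) := by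
    rw [hAtten]
    simp only [Matrix.add_apply, Matrix.smul_apply, key, hC3, zero_add, smul_eq_mul]
    ring
  refine ⟨hA, ?_⟩
  rw [hA]
  -- trace computation
  have htr : (W * Hᵀ).trace = ∑ i : Fin D, ∑ j : Fin D, W i j * H i j := by
    rw [Matrix.trace]
    refine Finset.sum_congr rfl fun i _ => ?_
    rw [Matrix.diag_apply, Matrix.mul_apply]
    exact Finset.sum_congr rfl fun j _ => by rw [transpose_apply]
  rw [htr]
  rcases Nat.eq_zero_or_pos D with hD | hD
  · subst hD
    simp [Finset.sum_of_isEmpty, dotProduct]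
  · have hDne : (D : ℝ) ≠ 0 := Nat.cast_ne_zero.mpr hD.ne'
    simp only [hW, hH, dotProduct, mulVec, submatrix_apply, dotProduct]
    simp only [Finset.mul_sum, Finset.sum_mul]
    have swap3 : ∀ f : Fin D → Fin D → Fin L → ℝ,
        (∑ i : Fin D, ∑ j : Fin D, ∑ l : Fin L, f i j l)
          = ∑ l : Fin L, ∑ j : Fin D, ∑ i : Fin D, f i j l := by
      intro f
      calc (∑ i : Fin D, ∑ j : Fin D, ∑ l : Fin L, f i j l)
          = ∑ j : Fin D, ∑ i : Fin D, ∑ l : Fin L, f i j l := Finset.sum_comm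
        _ = ∑ j : Fin D, ∑ l : Fin L, ∑ i : Fin D, f i j l :=
            Finset.sum_congr rfl fun j _ => Finset.sum_comm
        _ = ∑ l : Fin L, ∑ j : Fin D, ∑ i : Fin D, f i j l := Finset.sum_comm
    rw [swap3]
    refine Finset.sum_congr rfl fun l _ => ?_
    refine Finset.sum_congr rfl fun j _ => ?_
    refine Finset.sum_congr rfl fun i _ => ?_
    have hLne : (L : ℝ) ≠ 0 := Nat.cast_ne_zero.mpr (Fin.pos l).ne'
    field_simp
end
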